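/- Fix λ > 1, y > 0 and d ∈ ℝ. Then there exists exactly one x ∈ (|d|/y, ∞) satisfying the criticality equation L + M y²/√(x²y²−d²) = 2√(A(x,y,d)). -/

import Mathlib

noncomputable section

def Afun (l x y d : ℝ) : ℝ :=
  (x ^ 2 + y ^ 2) * (l ^ 2 + 1 / l ^ 2) / 2
    + (l ^ 2 - 1 / l ^ 2) * Real.sqrt (x ^ 2 * y ^ 2 - d ^ 2) + 2 * d

def Fcrit (l x y d : ℝ) : ℝ :=
  2 * Real.sqrt (Afun l x y d)
    - ((l ^ 2 + 1 / l ^ 2) + (l ^ 2 - 1 / l ^ 2) * y ^ 2 / Real.sqrt (x ^ 2 * y ^ 2 - d ^ 2))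

lemma crit_dom {y d x : ℝ} (hy : 0 < y) (hx : |d| / y < x) :
    0 < x ∧ |d| < x * y ∧ 0 < x ^ 2 * y ^ 2 - d ^ 2 := by
  have he0 : 0 ≤ |d| / y := by positivity
  have hx0 : 0 < x := lt_of_le_of_lt he0 hx
  have hxy : |d| < x * y := by rwa [div_lt_iff₀ hy] at hx
  refine ⟨hx0, hxy, ?_⟩
  nlinarith [abs_nonneg d, sq_abs d]

lemma crit_M_pos {l : ℝ} (hl : 1 < l) : 0 < l ^ 2 - 1 / l ^ 2 := by
  have h1 : (1:ℝ) < l ^ 2 := by nlinarith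
  have h2 : (0:ℝ) < l ^ 2 := by positivity
  have : 1 / l ^ 2 < 1 := by rw [div_lt_one h2]; exact h1
  linarith

lemma crit_L_ge {l : ℝ} (hl : 1 < l) : 2 ≤ l ^ 2 + 1 / l ^ 2 := by
  have h2 : (0:ℝ) < l ^ 2 := by positivity
  have key : l ^ 2 + 1 / l ^ 2 - 2 = (l ^ 2 - 1) ^ 2 / l ^ 2 := by field_simp; ring
  nlinarith [div_nonneg (sq_nonneg (l ^ 2 - 1)) h2.le]

lemma crit_A_pos {l y d x : ℝ} (hl : 1 < l) (hy : 0 < y) (hx : |d| / y < x) :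
    0 < Afun l x y d := by
  obtain ⟨hx0, hxy, hs2⟩ := crit_dom hy hx
  have hsq := Real.sqrt_nonneg (x ^ 2 * y ^ 2 - d ^ 2)
  have hM := crit_M_pos hl
  have hL := crit_L_ge hl
  have hd := neg_abs_le d
  unfold Afun
  nlinarith [sq_nonneg (x - y), mul_nonneg hM.le hsq,
    mul_nonneg (by nlinarith : (0:ℝ) ≤ x ^ 2 + y ^ 2) (by linarith : (0:ℝ) ≤ l ^ 2 + 1 / l ^ 2 - 2)]

lemma crit_F_mono {l y d : ℝ} (hl : 1 < l) (hy : 0 < y) :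
    StrictMonoOn (fun x => Fcrit l x y d) (Set.Ioi (|d| / y)) := by
  intro x₁ h₁ x₂ h₂ h12
  obtain ⟨hx10, hxy1, hs21⟩ := crit_dom hy h₁
  obtain ⟨hx20, hxy2, hs22⟩ := crit_dom hy h₂
  have hM := crit_M_pos hl
  have hL := crit_L_ge hl
  have hs1 : 0 < Real.sqrt (x₁ ^ 2 * y ^ 2 - d ^ 2) := Real.sqrt_pos.mpr hs21
  have hs2 : 0 < Real.sqrt (x₂ ^ 2 * y ^ 2 - d ^ 2) := Real.sqrt_pos.mpr hs22
  have hx2sq : x₁ ^ 2 < x₂ ^ 2 := by nlinarith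
  have hslt : Real.sqrt (x₁ ^ 2 * y ^ 2 - d ^ 2) < Real.sqrt (x₂ ^ 2 * y ^ 2 - d ^ 2) :=
    Real.sqrt_lt_sqrt hs21.le (by nlinarith [mul_lt_mul_of_pos_right hx2sq (pow_pos hy 2)])
  have hAlt : Afun l x₁ y d < Afun l x₂ y d := by
    unfold Afun
    nlinarith [mul_nonneg (by nlinarith : (0:ℝ) ≤ x₂ ^ 2 - x₁ ^ 2)
      (by linarith : (0:ℝ) ≤ l ^ 2 + 1 / l ^ 2 - 2)]
  have hsqA : Real.sqrt (Afun l x₁ y d) < Real.sqrt (Afun l x₂ y d) :=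
    Real.sqrt_lt_sqrt (crit_A_pos hl hy h₁).le hAlt
  have hdiv : (l ^ 2 - 1 / l ^ 2) * y ^ 2 / Real.sqrt (x₂ ^ 2 * y ^ 2 - d ^ 2)
      < (l ^ 2 - 1 / l ^ 2) * y ^ 2 / Real.sqrt (x₁ ^ 2 * y ^ 2 - d ^ 2) :=
    div_lt_div_of_pos_left (by positivity) hs1 hslt
  simp only [Fcrit]
  linarith

lemma crit_F_cont {l y d : ℝ} (hy : 0 < y) :
    ContinuousOn (fun x => Fcrit l x y d) (Set.Ioi (|d| / y)) := by
  have h1 : Continuous fun x : ℝ => Real.sqrt (x ^ 2 * y ^ 2 - d ^ 2) :=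
    Real.continuous_sqrt.comp (by continuity)
  have h2 : Continuous fun x : ℝ => Afun l x y d := by
    unfold Afun
    exact (((continuous_pow 2).add continuous_const).mul continuous_const).div_const 2
      |>.add (continuous_const.mul h1) |>.add continuous_const
  unfold Fcrit
  refine ContinuousOn.sub (continuous_const.mul (Real.continuous_sqrt.comp h2)).continuousOn
    (ContinuousOn.add continuousOn_const
      (ContinuousOn.div continuousOn_const h1.continuousOn ?_))
  intro x hx
  exact (Real.sqrt_pos.mpr (crit_dom hy hx).2.2).ne'

/-- For fixed `λ > 1`, `y > 0` and `d ∈ ℝ`, there exists exactly one `x ∈ (|d|/y, ∞)`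
satisfying the criticality equation `L + M y²/√(x²y²−d²) = 2√(A(x,y,d))`. -/
theorem criticality_existsUnique (l : ℝ) (hl : 1 < l) (y d : ℝ) (hy : 0 < y) :
    ∃! x : ℝ, |d| / y < x ∧
      (l ^ 2 + 1 / l ^ 2) + (l ^ 2 - 1 / l ^ 2) * y ^ 2 / Real.sqrt (x ^ 2 * y ^ 2 - d ^ 2)
        = 2 * Real.sqrt (Afun l x y d) := by
  have hM := crit_M_pos hl
  have hL := crit_L_ge hl
  obtain ⟨L, hLdef⟩ : ∃ L : ℝ, L = l ^ 2 + 1 / l ^ 2 := ⟨_, rfl⟩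
  obtain ⟨M, hMdef⟩ : ∃ M : ℝ, M = l ^ 2 - 1 / l ^ 2 := ⟨_, rfl⟩
  rw [← hLdef] at hL
  rw [← hMdef] at hM
  obtain ⟨q, hqdef⟩ : ∃ q : ℝ, q = (|d| + 1) / y := ⟨_, rfl⟩
  have hq0 : 0 ≤ q := by rw [hqdef]; positivity
  have hqy : q * y = |d| + 1 := by rw [hqdef]; field_simp
  -- upper bound for A near the left endpoint
  obtain ⟨B, hBdef⟩ : ∃ B : ℝ,
      B = (q ^ 2 + y ^ 2) * L / 2 + M + 2 * |d| := ⟨_, rfl⟩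
  have hB0 : 0 ≤ B := by
    have h1 : 0 ≤ (q ^ 2 + y ^ 2) * L / 2 := by positivity
    have h2 : 0 ≤ 2 * |d| := by positivity
    rw [hBdef]; linarith
  obtain ⟨D, hDdef⟩ : ∃ D : ℝ, D = L + 2 * Real.sqrt B + 1 := ⟨_, rfl⟩
  have hD : 0 < D := by
    have := Real.sqrt_nonneg B
    rw [hDdef]; linarith
  obtain ⟨t, htdef⟩ : ∃ t : ℝ, t = min 1 (M * y ^ 2 / D) := ⟨_, rfl⟩
  have ht0 : 0 < t := by rw [htdef]; exact lt_min one_pos (by positivity)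
  have ht1 : t ≤ 1 := htdef ▸ min_le_left _ _
  have htK : D ≤ M * y ^ 2 / t := by
    rw [le_div_iff₀ ht0]
    have h := min_le_right 1 (M * y ^ 2 / D)
    rw [← htdef, le_div_iff₀ hD] at h
    linarith
  -- left point a
  obtain ⟨a, hadef⟩ : ∃ a : ℝ, a = Real.sqrt (d ^ 2 + t ^ 2) / y := ⟨_, rfl⟩
  have hdt : d ^ 2 < d ^ 2 + t ^ 2 := by linarith [pow_pos ht0 2]
  have ha_e : |d| / y < a := by
    have h : |d| < Real.sqrt (d ^ 2 + t ^ 2) := by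
      rw [← Real.sqrt_sq_eq_abs]
      exact Real.sqrt_lt_sqrt (sq_nonneg d) hdt
    rw [hadef]
    exact div_lt_div_of_pos_right h hy
  have ha2 : a ^ 2 * y ^ 2 - d ^ 2 = t ^ 2 := by
    have h : a ^ 2 = (d ^ 2 + t ^ 2) / y ^ 2 := by
      rw [hadef, div_pow, Real.sq_sqrt (by positivity)]
    rw [h]; field_simp; ring
  have hsa : Real.sqrt (a ^ 2 * y ^ 2 - d ^ 2) = t := by
    rw [ha2, Real.sqrt_sq ht0.le]
  have ha_ub : a * y ≤ |d| + 1 := by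
    have h1 : Real.sqrt (d ^ 2 + t ^ 2) ≤ |d| + t := by
      rw [show d ^ 2 + t ^ 2 = |d| ^ 2 + t ^ 2 by rw [sq_abs]]
      have h := Real.sqrt_le_sqrt
        (show |d| ^ 2 + t ^ 2 ≤ (|d| + t) ^ 2 by nlinarith [abs_nonneg d])
      rwa [Real.sqrt_sq (by positivity)] at h
    have h2 : a * y = Real.sqrt (d ^ 2 + t ^ 2) := by
      rw [hadef]; field_simp
    linarith
  have ha_pos : 0 < a := lt_of_le_of_lt (by positivity) ha_e
  have ha_le : a ≤ q := by
    rw [hqdef, le_div_iff₀ hy]; exact ha_ub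
  have hAa : Afun l a y d ≤ B := by
    have ha2le : a ^ 2 ≤ q ^ 2 := pow_le_pow_left₀ ha_pos.le ha_le 2
    have hd := le_abs_self d
    have hMt : M * t ≤ M := mul_le_of_le_one_right hM.le ht1
    have hp : a ^ 2 * L ≤ q ^ 2 * L := mul_le_mul_of_nonneg_right ha2le (by linarith)
    have e1 : (a ^ 2 + y ^ 2) * L / 2 = a ^ 2 * L / 2 + y ^ 2 * L / 2 := by ring
    have e2 : (q ^ 2 + y ^ 2) * L / 2 = q ^ 2 * L / 2 + y ^ 2 * L / 2 := by ring
    unfold Afun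
    rw [hsa, ← hLdef, ← hMdef, hBdef]
    linarith [hp, hMt, hd, e1, e2]
  have hFa : Fcrit l a y d < 0 := by
    have h1 : Real.sqrt (Afun l a y d) ≤ Real.sqrt B := Real.sqrt_le_sqrt hAa
    simp only [Fcrit]
    rw [hsa, ← hLdef, ← hMdef]
    rw [hDdef] at htK
    linarith
  -- right point b
  obtain ⟨K, hKdef⟩ : ∃ K : ℝ, K = L + M * y ^ 2 := ⟨_, rfl⟩
  have hK0 : 0 < K := by
    have h : 0 < M * y ^ 2 := by positivity
    rw [hKdef]; linarith
  obtain ⟨b, hbdef⟩ : ∃ b : ℝ, b = Real.sqrt (2 * |d| + K ^ 2 + q ^ 2 + 1) := ⟨_, rfl⟩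
  have hbarg : 0 ≤ 2 * |d| + K ^ 2 + q ^ 2 + 1 := by positivity
  have hb2 : b ^ 2 = 2 * |d| + K ^ 2 + q ^ 2 + 1 := by rw [hbdef]; exact Real.sq_sqrt hbarg
  have hb0 : 0 ≤ b := hbdef ▸ Real.sqrt_nonneg _
  have hq_b : q < b := by
    have h : q ^ 2 < b ^ 2 := by
      rw [hb2]; linarith [abs_nonneg d, sq_nonneg K]
    exact lt_of_pow_lt_pow_left₀ 2 hb0 h
  have hb_e : |d| / y < b := by
    have h : |d| / y < q := by
      rw [hqdef]
      exact div_lt_div_of_pos_right (by linarith) hy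
    linarith
  obtain ⟨hb_pos, hby, hsb2⟩ := crit_dom hy hb_e
  have hsb1 : 1 ≤ Real.sqrt (b ^ 2 * y ^ 2 - d ^ 2) := by
    have harg : 1 ≤ b ^ 2 * y ^ 2 - d ^ 2 := by
      have hqy2 : q ^ 2 * y ^ 2 = (|d| + 1) ^ 2 := by rw [← hqy]; ring
      have e1 : b ^ 2 * y ^ 2 = (2 * |d| + K ^ 2 + 1) * y ^ 2 + q ^ 2 * y ^ 2 := by
        rw [hb2]; ring
      have e2 : (|d| + 1) ^ 2 = d ^ 2 + 2 * |d| + 1 := by rw [← sq_abs d]; ring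
      have p1 : 0 ≤ (2 * |d| + K ^ 2 + 1) * y ^ 2 := by positivity
      linarith [abs_nonneg d]
    calc (1:ℝ) = Real.sqrt 1 := (Real.sqrt_one).symm
    _ ≤ _ := Real.sqrt_le_sqrt harg
  have hAb : K ^ 2 ≤ Afun l b y d := by
    have hsq := Real.sqrt_nonneg (b ^ 2 * y ^ 2 - d ^ 2)
    have hd := neg_abs_le d
    have e1 : (b ^ 2 + y ^ 2) * L / 2 - (b ^ 2 + y ^ 2) = (b ^ 2 + y ^ 2) * (L - 2) / 2 := by
      ring
    have p1 : 0 ≤ (b ^ 2 + y ^ 2) * (L - 2) / 2 := by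
      have := mul_nonneg (by positivity : (0:ℝ) ≤ b ^ 2 + y ^ 2) (by linarith : (0:ℝ) ≤ L - 2)
      linarith
    have p2 : 0 ≤ M * Real.sqrt (b ^ 2 * y ^ 2 - d ^ 2) := mul_nonneg hM.le hsq
    unfold Afun
    rw [← hLdef, ← hMdef]
    linarith [e1, p1, p2, hb2, sq_nonneg q, sq_nonneg y, abs_nonneg d]
  have hFb : 0 < Fcrit l b y d := by
    have h1 : K ≤ Real.sqrt (Afun l b y d) := by
      have h := Real.sqrt_le_sqrt hAb
      rwa [Real.sqrt_sq hK0.le] at h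
    have h2 : M * y ^ 2 / Real.sqrt (b ^ 2 * y ^ 2 - d ^ 2) ≤ M * y ^ 2 :=
      div_le_self (by positivity) hsb1
    simp only [Fcrit]
    rw [← hLdef, ← hMdef]
    rw [hKdef] at h1
    linarith
  have hab : a < b := lt_of_le_of_lt ha_le hq_b
  -- IVT
  have hsub : Set.Icc a b ⊆ Set.Ioi (|d| / y) := fun x hx => lt_of_lt_of_le ha_e hx.1
  have hcont : ContinuousOn (fun x => Fcrit l x y d) (Set.Icc a b) :=
    (crit_F_cont hy).mono hsub
  have hivt := intermediate_value_Icc hab.le hcont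
  have h0mem : (0:ℝ) ∈ Set.Icc (Fcrit l a y d) (Fcrit l b y d) := ⟨hFa.le, hFb.le⟩
  obtain ⟨x, hxmem, hFx'0⟩ := hivt h0mem
  have hFx : Fcrit l x y d = 0 := hFx'0
  have hxe : |d| / y < x := hsub hxmem
  refine ⟨x, ⟨hxe, ?_⟩, ?_⟩
  · simp only [Fcrit] at hFx
    linarith
  · rintro x' ⟨hx'e, heq'⟩
    have hFx' : Fcrit l x' y d = 0 := by
      simp only [Fcrit]
      linarith
    exact (crit_F_mono hl hy).injOn hx'e hxe
      (by show Fcrit l x' y d = Fcrit l x y d; rw [hFx', hFx])
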